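/- Let M ≥ 1 be an integer, let N ∈ ℂ be arbitrary, let z_1, …, z_M ∈ ℂ be pairwise distinct, and let x, y ∈ ℂ with x ≠ y. Define ψ(z_1,…,z_M, x, y) = ∏_{i=1}^{M} (x − z_i)(y − z_i). Then Σ_{i=1}^{M} [ (1/2) z_i² ∂²ψ/∂z_i² + Σ_{j≠i} (2 z_i²/(z_i − z_j)) ∂ψ/∂z_i − ((N−3)/2) z_i ∂ψ/∂z_i ] = M(2M − N + 2) ψ + [ −x² ∂²ψ/∂x² − y² ∂²ψ/∂y² + ((N−3)/2)( x ∂ψ/∂x + y ∂ψ/∂y ) ] − (1/(x−y)) [ x² ∂ψ/∂x − y² ∂ψ/∂y ]. -/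

import Mathlib

open Finset

private lemma swap_sum {α β : Type*} [DecidableEq α] [AddCommMonoid β] (s : Finset α)
    (g : α → α → β) :
    ∑ i ∈ s, ∑ j ∈ s.erase i, g i j = ∑ i ∈ s, ∑ j ∈ s.erase i, g j i := by
  have h : ∀ (g : α → α → β), ∑ i ∈ s, ∑ j ∈ s.erase i, g i j
      = ∑ i ∈ s, ∑ j ∈ s, if j ≠ i then g i j else 0 := by
    intro g
    refine Finset.sum_congr rfl fun i _ => ?_
    rw [← Finset.filter_ne' s i, Finset.sum_filter]
  rw [h, h, Finset.sum_comm]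
  refine Finset.sum_congr rfl fun i _ => Finset.sum_congr rfl fun j _ => ?_
  by_cases hij : i = j
  · simp [hij]
  · simp [hij, Ne.symm hij]

private lemma quadDeriv (x y k s : ℂ) :
    HasDerivAt (fun t => (x - t) * (y - t) * k) ((2 * s - x - y) * k) s := by
  have h := (((hasDerivAt_id s).const_sub x).mul ((hasDerivAt_id s).const_sub y)).mul_const k
  simp only [id_eq, Pi.mul_apply] at h
  exact h.congr_deriv (by ring)

private lemma linDeriv (x y k s : ℂ) :
    HasDerivAt (fun u => (2 * u - x - y) * k) (2 * k) s := by
  have h := ((((hasDerivAt_id s).const_mul 2).sub_const x).sub_const y).mul_const k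
  simpa using h

private lemma prodDeriv {M : ℕ} (z w : Fin M → ℂ) (s : ℂ) :
    HasDerivAt (fun t => ∏ i, (t - z i) * w i)
      (∑ i, (∏ j ∈ univ.erase i, (s - z j) * w j) * w i) s := by
  have h : ∀ i ∈ (univ : Finset (Fin M)),
      HasDerivAt (fun t : ℂ => (t - z i) * w i) (w i) s := by
    intro i _
    simpa using ((hasDerivAt_id s).sub_const (z i)).mul_const (w i)
  have := HasDerivAt.fun_finsetProd h
  simpa [smul_eq_mul] using this

private lemma prodDeriv2 {M : ℕ} (z w : Fin M → ℂ) (x : ℂ) :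
    iteratedDeriv 2 (fun t => ∏ i, (t - z i) * w i) x
      = ∑ i, (∑ j ∈ univ.erase i,
          (∏ k ∈ (univ.erase i).erase j, (x - z k) * w k) * w j) * w i := by
  have hD : deriv (fun t => ∏ i, (t - z i) * w i)
      = fun s => ∑ i, (∏ j ∈ univ.erase i, (s - z j) * w j) * w i :=
    funext fun s => (prodDeriv z w s).deriv
  rw [show (2 : ℕ) = 1 + 1 from rfl, iteratedDeriv_succ, iteratedDeriv_one, hD]
  have h : ∀ i ∈ (univ : Finset (Fin M)),
      HasDerivAt (fun s : ℂ => (∏ j ∈ univ.erase i, (s - z j) * w j) * w i)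
        ((∑ j ∈ univ.erase i,
          (∏ k ∈ (univ.erase i).erase j, (x - z k) * w k) * w j) * w i) x := by
    intro i _
    have h2 : ∀ j ∈ univ.erase i, HasDerivAt (fun s : ℂ => (s - z j) * w j) (w j) x := by
      intro j _
      simpa using ((hasDerivAt_id x).sub_const (z j)).mul_const (w j)
    have := (HasDerivAt.fun_finsetProd h2).mul_const (w i)
    simpa [smul_eq_mul] using this
  exact (HasDerivAt.fun_sum h).deriv

/-- `ψ(z_1,…,z_M,x,y) = ∏_{i=1}^M (x − z_i)(y − z_i)`. -/
noncomputable def ψ {M : ℕ} (z : Fin M → ℂ) (x y : ℂ) : ℂ :=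
  ∏ i : Fin M, (x - z i) * (y - z i)

theorem stmt19 (M : ℕ) (hM : 1 ≤ M) (N : ℂ) (z : Fin M → ℂ) (hz : Function.Injective z)
    (x y : ℂ) (hxy : x ≠ y) :
    ∑ i : Fin M,
      ((1 / 2) * z i ^ 2 * iteratedDeriv 2 (fun t => ψ (Function.update z i t) x y) (z i)
        + (∑ j ∈ univ.erase i, 2 * z i ^ 2 / (z i - z j)) *
            deriv (fun t => ψ (Function.update z i t) x y) (z i)
        - (N - 3) / 2 * z i * deriv (fun t => ψ (Function.update z i t) x y) (z i))
    = (M : ℂ) * (2 * (M : ℂ) - N + 2) * ψ z x y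
      + (-(x ^ 2) * iteratedDeriv 2 (fun t => ψ z t y) x
          - y ^ 2 * iteratedDeriv 2 (fun t => ψ z x t) y
          + (N - 3) / 2 * (x * deriv (fun t => ψ z t y) x + y * deriv (fun t => ψ z x t) y))
      - 1 / (x - y) * (x ^ 2 * deriv (fun t => ψ z t y) x - y ^ 2 * deriv (fun t => ψ z x t) y) := by
  classical
  have hxy' : x - y ≠ 0 := sub_ne_zero.mpr hxy
  set Ψ : ℂ := ψ z x y with hΨ
  set c : Fin M → ℂ := fun i => ∏ j ∈ univ.erase i, (x - z j) * (y - z j) with hc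
  set d : Fin M → Fin M → ℂ :=
    fun i j => ∏ k ∈ (univ.erase i).erase j, (x - z k) * (y - z k) with hd
  -- basic product facts
  have hci : ∀ i : Fin M, (x - z i) * (y - z i) * c i = Ψ := by
    intro i
    simp only [hc, hΨ, ψ]
    exact Finset.mul_prod_erase univ (fun j => (x - z j) * (y - z j)) (mem_univ i)
  have hdij : ∀ i j : Fin M, j ∈ univ.erase i → (x - z j) * (y - z j) * d i j = c i := by
    intro i j hj
    simp only [hc, hd]
    exact Finset.mul_prod_erase (univ.erase i) (fun k => (x - z k) * (y - z k)) hj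
  have hdsymm : ∀ i j : Fin M, d i j = d j i := by
    intro i j
    simp only [hd]
    rw [Finset.erase_right_comm]
  -- derivatives in the z variables
  have hzfun : ∀ i : Fin M,
      (fun t => ψ (Function.update z i t) x y) = fun t => (x - t) * (y - t) * c i := by
    intro i
    funext t
    show ∏ j, (x - Function.update z i t j) * (y - Function.update z i t j) = _
    rw [← Finset.mul_prod_erase univ _ (mem_univ i), Function.update_self]
    simp only [hc]
    congr 1
    refine Finset.prod_congr rfl fun j hj => ?_
    rw [Function.update_of_ne (Finset.ne_of_mem_erase hj)]
  have hd1 : ∀ i : Fin M,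
      deriv (fun t => ψ (Function.update z i t) x y) (z i) = (2 * z i - x - y) * c i := by
    intro i
    rw [hzfun i]
    exact (quadDeriv x y (c i) (z i)).deriv
  have hd2 : ∀ i : Fin M,
      iteratedDeriv 2 (fun t => ψ (Function.update z i t) x y) (z i) = 2 * c i := by
    intro i
    rw [hzfun i, show (2 : ℕ) = 1 + 1 from rfl, iteratedDeriv_succ, iteratedDeriv_one]
    have hD : deriv (fun t => (x - t) * (y - t) * c i) = fun s => (2 * s - x - y) * c i :=
      funext fun s => (quadDeriv x y (c i) s).deriv
    rw [hD]
    exact (linDeriv x y (c i) (z i)).deriv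
  -- derivatives in x
  have hex : (fun t => ψ z t y) = fun t => ∏ i, (t - z i) * (y - z i) := rfl
  have hRx : deriv (fun t => ψ z t y) x = ∑ i, c i * (y - z i) := by
    rw [hex, (prodDeriv z (fun i => y - z i) x).deriv]
  have hQx : iteratedDeriv 2 (fun t => ψ z t y) x
      = ∑ i, (∑ j ∈ univ.erase i, d i j * (y - z j)) * (y - z i) := by
    rw [hex, prodDeriv2 z (fun i => y - z i) x]
  -- derivatives in y
  have hey : (fun t => ψ z x t) = fun t => ∏ i, (t - z i) * (x - z i) := by
    funext t
    show ∏ i, (x - z i) * (t - z i) = _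
    exact Finset.prod_congr rfl fun i _ => mul_comm _ _
  have hcomm : ∀ i : Fin M, (∏ j ∈ univ.erase i, (y - z j) * (x - z j)) = c i := by
    intro i
    simp only [hc]
    exact Finset.prod_congr rfl fun j _ => mul_comm _ _
  have hdcomm : ∀ i j : Fin M,
      (∏ k ∈ (univ.erase i).erase j, (y - z k) * (x - z k)) = d i j := by
    intro i j
    simp only [hd]
    exact Finset.prod_congr rfl fun k _ => mul_comm _ _
  have hRy : deriv (fun t => ψ z x t) y = ∑ i, c i * (x - z i) := by
    rw [hey, (prodDeriv z (fun i => x - z i) y).deriv]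
    exact Finset.sum_congr rfl fun i _ => by rw [hcomm i]
  have hQy : iteratedDeriv 2 (fun t => ψ z x t) y
      = ∑ i, (∑ j ∈ univ.erase i, d i j * (x - z j)) * (x - z i) := by
    rw [hey, prodDeriv2 z (fun i => x - z i) y]
    refine Finset.sum_congr rfl fun i _ => ?_
    congr 1
    exact Finset.sum_congr rfl fun j _ => by rw [hdcomm i j]
  -- rewrite the goal
  simp only [hd1, hd2]
  rw [hRx, hRy, hQx, hQy]
  -- sum over Fin M of Ψ
  have hMΨ : ∑ i : Fin M, (x - z i) * (y - z i) * c i = (M : ℂ) * Ψ := by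
    rw [Finset.sum_congr rfl fun i _ => hci i, Finset.sum_const, Finset.card_univ,
      Fintype.card_fin, nsmul_eq_mul]
  -- Step 1 : reorganize the LHS
  have hL : ∑ i : Fin M,
      ((1 / 2) * z i ^ 2 * (2 * c i)
        + (∑ j ∈ univ.erase i, 2 * z i ^ 2 / (z i - z j)) * ((2 * z i - x - y) * c i)
        - (N - 3) / 2 * z i * ((2 * z i - x - y) * c i))
      = (∑ i : Fin M, (z i ^ 2 - (N - 3) / 2 * z i * (2 * z i - x - y)) * c i)
        + ∑ i : Fin M, ∑ j ∈ univ.erase i,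
            2 * z i ^ 2 / (z i - z j) * ((2 * z i - x - y) * c i) := by
    rw [← Finset.sum_add_distrib]
    refine Finset.sum_congr rfl fun i _ => ?_
    rw [Finset.sum_mul]
    ring
  -- Step 2 : symmetrization of the double sum
  have claim : (∑ i : Fin M, ∑ j ∈ univ.erase i,
        2 * z i ^ 2 / (z i - z j) * ((2 * z i - x - y) * c i))
      = ∑ i : Fin M, ∑ j ∈ univ.erase i,
          (2 * Ψ - x ^ 2 * (d i j * (y - z j) * (y - z i))
            - y ^ 2 * (d i j * (x - z j) * (x - z i))) := by
    set g : Fin M → Fin M → ℂ :=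
      fun i j => 2 * z i ^ 2 / (z i - z j) * ((2 * z i - x - y) * c i) with hg
    set h : Fin M → Fin M → ℂ :=
      fun i j => 2 * Ψ - x ^ 2 * (d i j * (y - z j) * (y - z i))
        - y ^ 2 * (d i j * (x - z j) * (x - z i)) with hh
    have pair : ∀ i : Fin M, ∀ j ∈ univ.erase i, g i j + g j i = h i j + h j i := by
      intro i j hj
      have hji : j ≠ i := Finset.ne_of_mem_erase hj
      have hij : i ≠ j := hji.symm
      have hz1 : z i - z j ≠ 0 := sub_ne_zero.mpr (fun e => hij (hz e))
      have hz2 : z j - z i ≠ 0 := sub_ne_zero.mpr (fun e => hji (hz e))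
      have hi' : i ∈ univ.erase j := Finset.mem_erase.mpr ⟨hij, mem_univ i⟩
      have e0 : (x - z i) * (y - z i) * c i = Ψ := hci i
      have e1 : (x - z j) * (y - z j) * d i j = c i := hdij i j hj
      have e2 : (x - z i) * (y - z i) * d j i = c j := hdij j i hi'
      have ed : d i j = d j i := hdsymm i j
      simp only [hg, hh]
      rw [← e0, ← e1, ← e2, ed]
      field_simp
      ring
    have e1 := swap_sum univ g
    have e2 := swap_sum univ h
    have e3 : ∑ i : Fin M, ∑ j ∈ univ.erase i, (g i j + g j i)
        = ∑ i : Fin M, ∑ j ∈ univ.erase i, (h i j + h j i) :=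
      Finset.sum_congr rfl fun i _ => Finset.sum_congr rfl fun j hj => pair i j hj
    have e3' : (∑ i : Fin M, ∑ j ∈ univ.erase i, g i j)
          + (∑ i : Fin M, ∑ j ∈ univ.erase i, g j i)
        = (∑ i : Fin M, ∑ j ∈ univ.erase i, h i j)
          + (∑ i : Fin M, ∑ j ∈ univ.erase i, h j i) := by
      simpa [Finset.sum_add_distrib] using e3
    linear_combination (e3' + e1 - e2) / 2
  -- Step 3 : evaluate the symmetric double sum
  have hMcast : ((M - 1 : ℕ) : ℂ) = (M : ℂ) - 1 := by
    push_cast [hM]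
    ring
  have h1 : (∑ i : Fin M, ∑ j ∈ univ.erase i,
        (2 * Ψ - x ^ 2 * (d i j * (y - z j) * (y - z i))
          - y ^ 2 * (d i j * (x - z j) * (x - z i))))
      = 2 * (M : ℂ) * ((M : ℂ) - 1) * Ψ
        - x ^ 2 * ∑ i, (∑ j ∈ univ.erase i, d i j * (y - z j)) * (y - z i)
        - y ^ 2 * ∑ i, (∑ j ∈ univ.erase i, d i j * (x - z j)) * (x - z i) := by
    have inner : ∀ i : Fin M, (∑ j ∈ univ.erase i,
          (2 * Ψ - x ^ 2 * (d i j * (y - z j) * (y - z i))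
            - y ^ 2 * (d i j * (x - z j) * (x - z i))))
        = 2 * ((M : ℂ) - 1) * Ψ
          - x ^ 2 * ((∑ j ∈ univ.erase i, d i j * (y - z j)) * (y - z i))
          - y ^ 2 * ((∑ j ∈ univ.erase i, d i j * (x - z j)) * (x - z i)) := by
      intro i
      rw [Finset.sum_sub_distrib, Finset.sum_sub_distrib, Finset.sum_const,
        Finset.card_erase_of_mem (mem_univ i), Finset.card_univ, Fintype.card_fin,
        nsmul_eq_mul, hMcast, ← Finset.mul_sum, ← Finset.mul_sum,
        ← Finset.sum_mul, ← Finset.sum_mul]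
      ring
    rw [Finset.sum_congr rfl fun i _ => inner i, Finset.sum_sub_distrib,
      Finset.sum_sub_distrib, Finset.sum_const, Finset.card_univ, Fintype.card_fin,
      nsmul_eq_mul, ← Finset.mul_sum, ← Finset.mul_sum]
    ring
  -- Step 4 : the single sum
  have h2 : (∑ i : Fin M, (z i ^ 2 - (N - 3) / 2 * z i * (2 * z i - x - y)) * c i)
      = (4 - N) * ((M : ℂ) * Ψ)
        + (N - 3) / 2 * (x * ∑ i, c i * (y - z i) + y * ∑ i, c i * (x - z i))
        - 1 / (x - y) * (x ^ 2 * ∑ i, c i * (y - z i) - y ^ 2 * ∑ i, c i * (x - z i)) := by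
    have per : ∀ i : Fin M, (z i ^ 2 - (N - 3) / 2 * z i * (2 * z i - x - y)) * c i
        = (4 - N) * ((x - z i) * (y - z i) * c i)
          + (N - 3) / 2 * (x * (c i * (y - z i)) + y * (c i * (x - z i)))
          - 1 / (x - y) * (x ^ 2 * (c i * (y - z i)) - y ^ 2 * (c i * (x - z i))) := by
      intro i
      field_simp
      ring
    rw [Finset.sum_congr rfl fun i _ => per i]
    simp only [Finset.sum_sub_distrib, Finset.sum_add_distrib, ← Finset.mul_sum, hMΨ]
  rw [hL, claim, h1, h2]
  ring
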